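/- arXiv:2403.07886 — 2 statements merged into one kernel-verified Lean document; each statement's English description precedes it below -/
import Mathlib

section
/- Let G = (V, E) be a finite simple undirected graph with |V| ≥ 3. If for every pair of distinct non-adjacent vertices a and b of G one has degree(a) + degree(b) ≥ |V|, then G contains a Hamiltonian cycle (a cycle visiting every vertex of G exactly once). -/
open SimpleGraph Finset

section OreAux

set_option linter.unusedSectionVars false

variable {V : Type*} [Fintype V] [DecidableEq V]

lemma walk_of_chain (G : SimpleGraph V) :
    ∀ (m : List V) (a b : V), List.Chain G.Adj a (m ++ [b]) →
      ∃ w : G.Walk a b, w.support = a :: (m ++ [b])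
  | [], a, b, h => by
    rw [List.nil_append] at h; unfold List.Chain at h; rw [List.chain_cons] at h
    exact ⟨Walk.cons h.1 Walk.nil, by simp⟩
  | c :: m, a, b, h => by
    rw [List.cons_append] at h; unfold List.Chain at h; rw [List.chain_cons] at h
    obtain ⟨w, hw⟩ := walk_of_chain G m c b h.2
    exact ⟨Walk.cons h.1 w, by simp [hw]⟩

lemma ore_dart_split {G : SimpleGraph V} {u v : V} (p : G.Walk u v) (x y : V) (hxy : G.Adj x y)
    (hd : (⟨(x, y), hxy⟩ : G.Dart) ∈ p.darts) :
    ∃ (q : G.Walk u x) (r : G.Walk y v), p = q.append (Walk.cons hxy r) := by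
  induction p with
  | nil => simp at hd
  | @cons a c b h p' ih =>
    rw [Walk.darts_cons, List.mem_cons] at hd
    rcases hd with hd | hd
    · obtain ⟨h1, h2⟩ := Prod.mk.injEq .. ▸ congrArg SimpleGraph.Dart.toProd hd
      subst h1; subst h2
      exact ⟨Walk.nil, p', rfl⟩
    · obtain ⟨q, r, hqr⟩ := ih hd
      exact ⟨Walk.cons h q, r, by rw [hqr, Walk.cons_append]⟩

lemma hamiltonian_path_of_cycle {G' : SimpleGraph V} {a b x : V} (hadj : G'.Adj a b)
    (c : G'.Walk x x) (hc : c.IsHamiltonianCycle)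
    (hdart : (⟨(a, b), hadj⟩ : G'.Dart) ∈ c.darts) :
    ∃ p : G'.Walk b a, p.IsHamiltonian ∧ s(a, b) ∉ p.edges := by
  obtain ⟨q, r, hqr⟩ := ore_dart_split c a b hadj hdart
  have hcsupp : c.support = q.support ++ r.support := by
    rw [hqr, Walk.support_append, Walk.support_cons, List.tail_cons]
  have htail : c.support.tail = q.support.tail ++ r.support := by
    rw [hcsupp, List.tail_append_of_ne_nil (Walk.support_ne_nil q)]
  have hcount := (Walk.isHamiltonianCycle_iff_isCycle_and_support_count_tail_eq_one.mp hc).2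
  have hnodupE : c.edges.Nodup := hc.isCycle.isCircuit.isTrail.edges_nodup
  have hcedges : c.edges = q.edges ++ (s(a, b) :: r.edges) := by
    rw [hqr, Walk.edges_append, Walk.edges_cons]
  rw [hcedges] at hnodupE
  have hq : s(a, b) ∉ q.edges :=
    fun h => (List.disjoint_of_nodup_append hnodupE) h List.mem_cons_self
  have hr : s(a, b) ∉ r.edges := (List.nodup_cons.mp (List.nodup_append'.mp hnodupE).2.1).1
  refine ⟨r.append q, fun z => ?_, ?_⟩
  · rw [Walk.support_append, List.Perm.count_eq (List.perm_append_comm), ← htail]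
    exact hcount z
  · rw [Walk.edges_append, List.mem_append]
    rintro (h | h)
    · exact hr h
    · exact hq h

lemma degree_mono (G G' : SimpleGraph V) [DecidableRel G.Adj] [DecidableRel G'.Adj]
    (h : G ≤ G') (x : V) : G.degree x ≤ G'.degree x := by
  simp_rw [← card_neighborFinset_eq_degree]
  apply Finset.card_le_card
  intro y hy
  rw [mem_neighborFinset] at hy ⊢
  exact h hy

lemma crossing (G : SimpleGraph V) [DecidableRel G.Adj] {u v : V}
    (hne : u ≠ v) (huv : ¬ G.Adj u v)
    (hsum : Fintype.card V ≤ G.degree u + G.degree v)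
    (p : G.Walk u v) (hp : p.IsHamiltonian) : G.IsHamiltonian := by
  classical
  have hpath : p.IsPath := hp.isPath
  have hnodup : p.support.Nodup := hpath.support_nodup
  have htail : p.support.tail.Nodup := hnodup.tail
  have hdartsnd : (p.darts.map (·.snd)).Nodup := by rw [Walk.map_snd_darts]; exact htail
  have hdartfst : (p.darts.map (·.fst)).Nodup := by
    rw [Walk.map_fst_darts]; exact hnodup.sublist (List.dropLast_sublist _)
  have hdnodup : p.darts.Nodup := hdartsnd.of_map
  -- the dart finset
  set s : Finset G.Dart := p.darts.toFinset with hs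
  have hscard : s.card = Fintype.card V - 1 := by
    rw [hs, List.toFinset_card_of_nodup hdnodup, Walk.length_darts, hp.length_eq]
  set A : Finset G.Dart := s.filter (fun d => G.Adj u d.snd) with hA
  set B : Finset G.Dart := s.filter (fun d => G.Adj v d.fst) with hB
  have hAcard : A.card = G.degree u := by
    rw [← card_neighborFinset_eq_degree]
    apply Finset.card_bij (fun d _ => d.snd)
    · intro d hd; rw [mem_neighborFinset]; exact (Finset.mem_filter.mp hd).2
    · intro d1 h1 d2 h2 hsnd
      exact List.inj_on_of_nodup_map hdartsnd
        (List.mem_toFinset.mp (Finset.mem_filter.mp h1).1)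
        (List.mem_toFinset.mp (Finset.mem_filter.mp h2).1) hsnd
    · intro w hw
      rw [mem_neighborFinset] at hw
      have hwu : w ≠ u := fun h => G.irrefl (h ▸ hw)
      have hwsup : w ∈ p.support := hp.mem_support w
      have : w ∈ p.support.tail := by
        rw [Walk.support_eq_cons, List.mem_cons] at hwsup
        rcases hwsup with h | h
        · exact absurd h hwu
        · exact h
      rw [← Walk.map_snd_darts, List.mem_map] at this
      obtain ⟨d, hd, hdw⟩ := this
      exact ⟨d, Finset.mem_filter.mpr ⟨List.mem_toFinset.mpr hd, hdw ▸ hw⟩, hdw⟩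
  have hBcard : B.card = G.degree v := by
    rw [← card_neighborFinset_eq_degree]
    apply Finset.card_bij (fun d _ => d.fst)
    · intro d hd; rw [mem_neighborFinset]; exact (Finset.mem_filter.mp hd).2
    · intro d1 h1 d2 h2 hfst
      exact List.inj_on_of_nodup_map hdartfst
        (List.mem_toFinset.mp (Finset.mem_filter.mp h1).1)
        (List.mem_toFinset.mp (Finset.mem_filter.mp h2).1) hfst
    · intro w hw
      rw [mem_neighborFinset] at hw
      have hwv : w ≠ v := fun h => G.irrefl (h ▸ hw)
      have hwsup : w ∈ p.support := hp.mem_support w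
      have : w ∈ p.darts.map (·.fst) := by
        rw [← Walk.map_fst_darts_append, List.mem_append] at hwsup
        rcases hwsup with h | h
        · exact h
        · simp at h; exact absurd h hwv
      rw [List.mem_map] at this
      obtain ⟨d, hd, hdw⟩ := this
      exact ⟨d, Finset.mem_filter.mpr ⟨List.mem_toFinset.mpr hd, hdw ▸ hw⟩, hdw⟩
  have hsub : A ∪ B ⊆ s := by
    intro d hd; rcases Finset.mem_union.mp hd with h | h <;> exact (Finset.mem_filter.mp h).1
  have hV1 : 1 ≤ Fintype.card V := Fintype.card_pos_iff.mpr ⟨u⟩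
  have hinter : (A ∩ B).Nonempty := by
    rw [← Finset.card_pos]
    have h1 := Finset.card_union_add_card_inter A B
    have h2 : (A ∪ B).card ≤ Fintype.card V - 1 := le_trans (Finset.card_le_card hsub) hscard.le
    omega
  obtain ⟨d, hd⟩ := hinter
  obtain ⟨⟨x, y⟩, hxy⟩ := d
  have hds : (⟨(x,y),hxy⟩ : G.Dart) ∈ p.darts :=
    List.mem_toFinset.mp (Finset.mem_filter.mp (Finset.mem_inter.mp hd).1).1
  have huy : G.Adj u y := (Finset.mem_filter.mp (Finset.mem_inter.mp hd).1).2
  have hvx : G.Adj v x := (Finset.mem_filter.mp (Finset.mem_inter.mp hd).2).2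
  obtain ⟨q, r, hqr⟩ := ore_dart_split p x y hxy hds
  -- supports
  have hsupp : p.support = q.support ++ r.support := by
    rw [hqr, Walk.support_append, Walk.support_cons, List.tail_cons]
  set w : G.Walk y u := r.append (Walk.cons hvx q.reverse) with hw
  have hwsupp : w.support = r.support ++ q.support.reverse := by
    rw [hw, Walk.support_append, Walk.support_cons, List.tail_cons, Walk.support_reverse]
  have hperm : w.support.Perm p.support := by
    rw [hwsupp, hsupp]
    exact (List.perm_append_comm.trans
      (List.Perm.append_right _ (q.support.reverse_perm)))
  have hdisj : ∀ z, z ∈ q.support → z ∈ r.support → False := by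
    have := hsupp ▸ hnodup
    intro z h1 h2
    exact (List.disjoint_of_nodup_append this) h1 h2
  have hwpath : w.IsPath := Walk.IsPath.mk' (hperm.nodup_iff.mpr hnodup)
  have hnoedge : s(u, y) ∉ w.edges := by
    intro he
    rw [hw, Walk.edges_append, Walk.edges_cons, List.mem_append, List.mem_cons] at he
    rcases he with he | he | he
    · exact hdisj u q.start_mem_support (Walk.fst_mem_support_of_mem_edges r he)
    · rw [Sym2.eq_iff] at he
      rcases he with ⟨h1, h2⟩ | ⟨h1, h2⟩
      · exact hne h1
      · exact huv (h2 ▸ huy)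
    · rw [Walk.edges_reverse, List.mem_reverse] at he
      exact hdisj y (Walk.snd_mem_support_of_mem_edges q he) r.start_mem_support
  set c : G.Walk u u := Walk.cons huy w with hc
  have hcyc : c.IsCycle := (Walk.cons_isCycle_iff w huy).mpr ⟨hwpath, hnoedge⟩
  intro _
  refine ⟨u, c, Walk.isHamiltonianCycle_iff_isCycle_and_support_count_tail_eq_one.mpr
    ⟨hcyc, fun z => ?_⟩⟩
  rw [hc, Walk.support_cons, List.tail_cons, hperm.count_eq]
  exact hp z

lemma complete_hamiltonian (G : SimpleGraph V) (hcard : 3 ≤ Fintype.card V)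
    (hG : ∀ a b : V, a ≠ b → G.Adj a b) : G.IsHamiltonian := by
  classical
  have hnodup : (Finset.univ : Finset V).toList.Nodup := Finset.nodup_toList _
  have hmem : ∀ x : V, x ∈ (Finset.univ : Finset V).toList :=
    fun x => Finset.mem_toList.mpr (Finset.mem_univ x)
  have hlen : (Finset.univ : Finset V).toList.length = Fintype.card V := by simp
  obtain ⟨a, y, m, b, hLeq⟩ : ∃ a y m b,
      (Finset.univ : Finset V).toList = a :: y :: (m ++ [b]) := by
    rcases hl : (Finset.univ : Finset V).toList with _ | ⟨a, _ | ⟨y, l1⟩⟩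
    · rw [hl] at hlen; simp at hlen; omega
    · rw [hl] at hlen; simp at hlen; omega
    · rcases List.eq_nil_or_concat l1 with h | ⟨m, b, h⟩
      · rw [hl, h] at hlen; simp at hlen; omega
      · exact ⟨a, y, m, b, by rw [h, List.concat_eq_append]⟩
  rw [hLeq] at hnodup hmem
  have hnd2 : (y :: (m ++ [b])).Nodup := (List.nodup_cons.mp hnodup).2
  have hanotin : a ∉ y :: (m ++ [b]) := (List.nodup_cons.mp hnodup).1
  have hchain : List.Chain G.Adj y (m ++ [b]) := by
    have hch' : (y :: (m ++ [b])).Chain' G.Adj :=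
      hnd2.isChain.imp (fun p q hpq => hG p q hpq)
    exact hch'
  obtain ⟨w, hwsupp⟩ := walk_of_chain G m y b hchain
  have hay : a ≠ y := fun h => hanotin (h ▸ List.mem_cons_self)
  have hba : b ≠ a := fun h => hanotin (h ▸ (by simp : b ∈ y :: (m ++ [b])))
  have hyb : y ∉ m ++ [b] := (List.nodup_cons.mp hnd2).1
  set w2 : G.Walk y a := w.concat (hG b a hba) with hw2
  have hw2supp : w2.support = (y :: (m ++ [b])) ++ [a] := by
    rw [hw2, Walk.support_concat, hwsupp]
  have hperm : w2.support.Perm (a :: y :: (m ++ [b])) := by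
    rw [hw2supp]
    exact List.perm_append_comm.trans (by rfl)
  have hw2path : w2.IsPath := Walk.IsPath.mk' (hperm.nodup_iff.mpr hnodup)
  have hnoedge : s(a, y) ∉ w2.edges := by
    intro he
    rw [hw2, Walk.edges_concat, List.concat_eq_append, List.mem_append, List.mem_singleton] at he
    rcases he with he | he
    · exact hanotin (hwsupp ▸ Walk.fst_mem_support_of_mem_edges w he)
    · rw [Sym2.eq_iff] at he
      rcases he with ⟨h1, h2⟩ | ⟨h1, h2⟩
      · exact hba h1.symm
      · subst h2; exact hyb (by simp)
  set c : G.Walk a a := Walk.cons (hG a y hay) w2 with hc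
  have hcyc : c.IsCycle := (Walk.cons_isCycle_iff w2 (hG a y hay)).mpr ⟨hw2path, hnoedge⟩
  intro _
  refine ⟨a, c, Walk.isHamiltonianCycle_iff_isCycle_and_support_count_tail_eq_one.mpr
    ⟨hcyc, fun z => ?_⟩⟩
  rw [hc, Walk.support_cons, List.tail_cons, hperm.count_eq]
  exact List.count_eq_one_of_mem hnodup (hmem z)

lemma ore_aux : ∀ (k : ℕ) (G : SimpleGraph V) (_inst : DecidableRel G.Adj),
    Gᶜ.edgeSet.ncard ≤ k → 3 ≤ Fintype.card V →
    (∀ a b : V, a ≠ b → ¬ G.Adj a b → Fintype.card V ≤ G.degree a + G.degree b) →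
    G.IsHamiltonian := by
  intro k
  induction k with
  | zero =>
    intro G inst hk hcard hdeg
    refine complete_hamiltonian G hcard (fun a b hab => ?_)
    by_contra hnadj
    have hmem : s(a, b) ∈ Gᶜ.edgeSet := by rw [mem_edgeSet]; exact ⟨hab, hnadj⟩
    have : 0 < Gᶜ.edgeSet.ncard := (Set.ncard_pos (Set.toFinite _)).mpr ⟨_, hmem⟩
    omega
  | succ k ih =>
    intro G inst hk hcard hdeg
    by_cases hcomp : ∀ a b : V, a ≠ b → G.Adj a b
    · exact complete_hamiltonian G hcard hcomp
    push_neg at hcomp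
    obtain ⟨a, b, hne, hnadj⟩ := hcomp
    set G' : SimpleGraph V := G ⊔ fromEdgeSet {s(a, b)} with hG'
    have inst' : DecidableRel G'.Adj := Classical.decRel _
    have hle : G ≤ G' := le_sup_left
    have hG'adj : ∀ x y : V, G'.Adj x y ↔ G.Adj x y ∨ (s(x, y) = s(a, b) ∧ x ≠ y) := by
      intro x y
      rw [hG', sup_adj, fromEdgeSet_adj, Set.mem_singleton_iff]
    have hab' : G'.Adj a b := (hG'adj a b).mpr (Or.inr ⟨rfl, hne⟩)
    -- measure decreases
    have hmemc : s(a, b) ∈ Gᶜ.edgeSet := by rw [mem_edgeSet]; exact ⟨hne, hnadj⟩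
    have hsubc : G'ᶜ.edgeSet ⊆ Gᶜ.edgeSet \ {s(a, b)} := by
      intro e
      refine Sym2.ind (fun x y he => ?_) e
      rw [mem_edgeSet, compl_adj] at he
      obtain ⟨hxy, hnadj'⟩ := he
      rw [hG'adj] at hnadj'
      push_neg at hnadj'
      refine ⟨by rw [mem_edgeSet, compl_adj]; exact ⟨hxy, hnadj'.1⟩, ?_⟩
      simp only [Set.mem_singleton_iff]
      exact fun h => hxy (hnadj'.2 h)
    have hk' : G'ᶜ.edgeSet.ncard ≤ k := by
      have h1 : G'ᶜ.edgeSet.ncard ≤ (Gᶜ.edgeSet \ {s(a, b)}).ncard :=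
        Set.ncard_le_ncard hsubc (Set.toFinite _)
      have h2 : (Gᶜ.edgeSet \ {s(a, b)}).ncard = Gᶜ.edgeSet.ncard - 1 :=
        Set.ncard_diff_singleton_of_mem hmemc
      have h3 : 0 < Gᶜ.edgeSet.ncard := (Set.ncard_pos (Set.toFinite _)).mpr ⟨_, hmemc⟩
      omega
    -- Ore condition for G'
    have hdeg' : ∀ x y : V, x ≠ y → ¬ G'.Adj x y →
        Fintype.card V ≤ G'.degree x + G'.degree y := by
      intro x y hxy hnadj'
      have hxy2 : ¬ G.Adj x y := fun h => hnadj' (hle h)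
      calc Fintype.card V ≤ G.degree x + G.degree y := hdeg x y hxy hxy2
        _ ≤ G'.degree x + G'.degree y :=
          Nat.add_le_add (degree_mono G G' hle x) (degree_mono G G' hle y)
    have hH' : G'.IsHamiltonian := ih G' inst' hk' hcard hdeg'
    obtain ⟨x, c, hc⟩ := hH' (by omega)
    -- edge set of G'
    have hedge : ∀ e, e ∈ G'.edgeSet → e ≠ s(a, b) → e ∈ G.edgeSet := by
      intro e he hne'
      rw [hG', edgeSet_sup, edgeSet_fromEdgeSet] at he
      rcases he with he | he
      · exact he
      · exact absurd he.1 (by simpa using hne')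
    by_cases hin : s(a, b) ∈ c.edges
    · -- the cycle uses the new edge; extract hamiltonian path in G
      have : ∃ d ∈ c.darts, d.edge = s(a, b) := by
        rwa [Walk.edges, List.mem_map] at hin
      obtain ⟨⟨⟨x1, y1⟩, hd⟩, hdmem, hdedge⟩ := this
      rw [Dart.edge, Sym2.eq_iff] at hdedge
      rcases hdedge with ⟨h1, h2⟩ | ⟨h1, h2⟩
      · dsimp only at h1 h2; subst x1 y1
        obtain ⟨p, hp, hpe⟩ := hamiltonian_path_of_cycle hd c hc hdmem
        have htr : ∀ e ∈ p.edges, e ∈ G.edgeSet := fun e he =>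
          hedge e (Walk.edges_subset_edgeSet p he) (fun h => hpe (h ▸ he))
        refine crossing G hne.symm (fun h => hnadj h.symm) ?_
          (p.transfer G htr) (fun z => ?_)
        · have := hdeg _ _ hne hnadj; omega
        · rw [Walk.support_transfer]; exact hp z
      · dsimp only at h1 h2; subst x1 y1
        obtain ⟨p, hp, hpe⟩ := hamiltonian_path_of_cycle hd c hc hdmem
        have hpe' := (Sym2.eq_swap ▸ hpe : s(a, b) ∉ p.edges)
        have htr : ∀ e ∈ p.edges, e ∈ G.edgeSet := fun e he =>
          hedge e (Walk.edges_subset_edgeSet p he) (fun h => hpe' (h ▸ he))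
        refine crossing G hne hnadj (hdeg _ _ hne hnadj)
          (p.transfer G htr) (fun z => ?_)
        rw [Walk.support_transfer]; exact hp z
    · -- the cycle avoids the new edge; transfer it
      have htr : ∀ e ∈ c.edges, e ∈ G.edgeSet := fun e he =>
        hedge e (Walk.edges_subset_edgeSet c he) (fun h => hin (h ▸ he))
      intro _
      refine ⟨x, c.transfer G htr,
        Walk.isHamiltonianCycle_iff_isCycle_and_support_count_tail_eq_one.mpr
          ⟨hc.isCycle.transfer htr, fun z => ?_⟩⟩
      rw [Walk.support_transfer]
      exact (Walk.isHamiltonianCycle_iff_isCycle_and_support_count_tail_eq_one.mp hc).2 z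

end OreAux

/-- **Ore's theorem**: if `G` is a finite simple graph on at least 3 vertices in which
every pair of distinct non-adjacent vertices `a`, `b` satisfies
`degree a + degree b ≥ |V|`, then `G` has a Hamiltonian cycle. -/
theorem ore_theorem {V : Type*} [Fintype V] [DecidableEq V]
    (G : SimpleGraph V) [DecidableRel G.Adj]
    (hcard : 3 ≤ Fintype.card V)
    (hdeg : ∀ a b : V, a ≠ b → ¬ G.Adj a b →
      Fintype.card V ≤ G.degree a + G.degree b) :
    G.IsHamiltonian :=
  ore_aux Gᶜ.edgeSet.ncard G inferInstance le_rfl hcard hdeg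
end

section
/- Let G = (V, E) be a finite simple undirected graph with |V| ≥ 3. If every vertex v of G has degree at least |V|/2, then G contains a Hamiltonian cycle (a cycle visiting every vertex of G exactly once). -/
open List

namespace DiracAux

variable {V : Type*}

/-- Build a walk from a chain of adjacencies. -/
def buildWalk (G : SimpleGraph V) : (a b : V) → (l : List V) →
    List.Chain G.Adj a (l ++ [b]) → G.Walk a b
  | _, _, [], h => SimpleGraph.Walk.cons (by cases h with | cons_cons h' _ => exact h')
      SimpleGraph.Walk.nil
  | _, b, c :: l, h =>
      SimpleGraph.Walk.cons (List.chain_cons.mp h).1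
        (buildWalk G c b l (List.chain_cons.mp h).2)

lemma buildWalk_support (G : SimpleGraph V) (a b : V) (l : List V) (h) :
    (buildWalk G a b l h).support = a :: (l ++ [b]) := by
  induction l generalizing a with
  | nil => simp [buildWalk]
  | cons c l ih =>
    simp [buildWalk]
    exact ih _ _

lemma not_mem_edges {G : SimpleGraph V} {v u : V} (p : G.Walk v u)
    (hp : p.IsPath) (hl : 2 ≤ p.length) : s(u, v) ∉ p.edges := by
  cases p with
  | nil => simp at hl
  | @cons _ w _ h q =>
    rw [SimpleGraph.Walk.cons_isPath_iff] at hp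
    obtain ⟨hq, hv⟩ := hp
    intro he
    rw [SimpleGraph.Walk.edges_cons, List.mem_cons] at he
    rcases he with he | he
    · rw [Sym2.eq_iff] at he
      rcases he with ⟨rfl, rfl⟩ | ⟨rfl, -⟩
      · exact hv q.start_mem_support
      · have : q = SimpleGraph.Walk.nil := (SimpleGraph.Walk.isPath_iff_eq_nil (p := q)).mp hq
        subst this
        simp at hl
    · exact hv (q.snd_mem_support_of_mem_edges he)

lemma chain'_rotate {R : V → V → Prop} {A B : List V} (h : List.Chain' R (A ++ B))
    (hcyc : ∀ x ∈ (A ++ B).getLast?, ∀ y ∈ (A ++ B).head?, R x y) :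
    List.Chain' R (B ++ A) := by
  rcases A with - | ⟨a, A⟩
  · simpa using h
  rcases B with - | ⟨b, B⟩
  · simpa using h
  rw [List.Chain', List.isChain_append] at h ⊢
  obtain ⟨h1, h2, h3⟩ := h
  refine ⟨h2, h1, ?_⟩
  intro x hx y hy
  apply hcyc
  · rw [List.getLast?_append]
    · exact hx
  · rw [List.head?_append_of_ne_nil]
    · exact hy
    · simp

end DiracAux

/-- **Dirac's theorem**: if `G` is a finite simple graph on at least 3 vertices in which
every vertex has degree at least `|V| / 2`, then `G` has a Hamiltonian cycle. -/
theorem dirac_theorem {V : Type*} [Fintype V] [DecidableEq V]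
    (G : SimpleGraph V) [DecidableRel G.Adj]
    (hcard : 3 ≤ Fintype.card V)
    (hdeg : ∀ v : V, (Fintype.card V : ℝ) / 2 ≤ (G.degree v : ℝ)) :
    G.IsHamiltonian := by
  classical
  set n := Fintype.card V with hn
  have hdeg' : ∀ v, n ≤ 2 * G.degree v := by
    intro v
    have h1 := hdeg v
    have h2 : (n : ℝ) ≤ 2 * (G.degree v : ℝ) := by linarith
    exact_mod_cast h2
  obtain ⟨v₀⟩ : Nonempty V := Fintype.card_pos_iff.mp (by omega)
  -- `Good P` means `P` is a (vertex list of a) path in `G`.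
  let Good : List V → Prop := fun P => P ≠ [] ∧ P.Chain' G.Adj ∧ P.Nodup
  let S0 : Set ℕ := {k | ∃ P, Good P ∧ P.length = k}
  have hS0ne : S0.Nonempty := ⟨1, [v₀], ⟨by simp, List.isChain_singleton v₀, by simp⟩, rfl⟩
  have hS0bdd : BddAbove S0 := by
    refine ⟨n, ?_⟩
    rintro k ⟨P, ⟨-, -, hnd⟩, rfl⟩
    exact hnd.length_le_card
  obtain ⟨P, hPgood, hPlen⟩ := Nat.sSup_mem hS0ne hS0bdd
  have hmax : ∀ Q, Good Q → Q.length ≤ P.length := by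
    intro Q hQ
    rw [hPlen]
    exact le_csSup hS0bdd ⟨Q, hQ, rfl⟩
  obtain ⟨hPne, hPchain, hPnd⟩ := hPgood
  set m := P.length with hm
  have hm0 : 0 < m := List.length_pos_iff.mpr hPne
  have hmn : m ≤ n := hPnd.length_le_card
  set a := P.head hPne with ha
  set b := P.getLast hPne with hb
  have haP : a ∈ P := List.head_mem hPne
  have hbP : b ∈ P := List.getLast_mem hPne
  have ha0 : P[0]'hm0 = a := List.getElem_zero hm0
  have hbm : P[m-1]'(by omega) = b := (List.getLast_eq_getElem hPne).symm
  -- all neighbors of the endpoints lie on `P`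
  have hnb_head : ∀ v, G.Adj a v → v ∈ P := by
    intro v hv
    by_contra hvP
    have hgood : Good (v :: P) := by
      refine ⟨by simp, List.isChain_cons.mpr ⟨?_, hPchain⟩, List.nodup_cons.mpr ⟨hvP, hPnd⟩⟩
      intro y hy
      rw [List.head?_eq_head hPne] at hy
      obtain rfl := Option.some_injective _ hy
      exact hv.symm
    have := hmax _ hgood
    simp only [List.length_cons] at this
    omega
  have hnb_last : ∀ v, G.Adj b v → v ∈ P := by
    intro v hv
    by_contra hvP
    have hgood : Good (P ++ [v]) := by
      refine ⟨by simp, List.isChain_append.mpr ⟨hPchain, List.isChain_singleton v, ?_⟩, ?_⟩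
      · intro x hx y hy
        rw [List.getLast?_eq_getLast hPne] at hx
        obtain rfl := Option.some_injective _ hx
        simp only [List.head?_cons, Option.mem_some_iff] at hy
        subst hy
        exact hv
      · rw [List.nodup_append]
        refine ⟨hPnd, List.nodup_singleton v, ?_⟩
        intro x hx y hxv
        rw [List.mem_singleton] at hxv
        subst hxv
        rintro rfl; exact hvP hx
    have := hmax _ hgood
    simp only [List.length_append, List.length_singleton] at this
    omega
  -- index sets for the rotation argument
  set Sa : Finset ℕ := (Finset.range (m-1)).filter (fun i => G.Adj a (P.getD (i+1) a)) with hSa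
  set Tb : Finset ℕ := (Finset.range (m-1)).filter (fun i => G.Adj b (P.getD i a)) with hTb
  have hcardSa : G.degree a ≤ Sa.card := by
    rw [← SimpleGraph.card_neighborFinset_eq_degree]
    apply Finset.card_le_card_of_injOn (fun v => P.idxOf v - 1)
    · intro v hv
      rw [Finset.mem_coe, SimpleGraph.mem_neighborFinset] at hv
      have hvP : v ∈ P := hnb_head v hv
      have hlt : P.idxOf v < m := List.idxOf_lt_length_iff.mpr hvP
      have hget : P[P.idxOf v]'hlt = v := List.getElem_idxOf hlt
      have h0 : P.idxOf v ≠ 0 := by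
        intro h0
        apply G.ne_of_adj hv
        rw [← ha0, ← hget]
        simp [h0]
      simp only [hSa, Finset.mem_coe, Finset.mem_filter, Finset.mem_range]
      refine ⟨by omega, ?_⟩
      have hplus : P.idxOf v - 1 + 1 = P.idxOf v := by omega
      rw [hplus, List.getD_eq_getElem _ _ hlt, hget]
      exact hv
    · intro v1 h1 v2 h2 he
      rw [Finset.mem_coe, SimpleGraph.mem_neighborFinset] at h1 h2
      have hv1P : v1 ∈ P := hnb_head v1 h1
      have hv2P : v2 ∈ P := hnb_head v2 h2
      have e1 : P.idxOf v1 ≠ 0 := by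
        intro h0
        apply G.ne_of_adj h1
        rw [← ha0, ← List.getElem_idxOf (List.idxOf_lt_length_iff.mpr hv1P)]
        simp [h0]
      have e2 : P.idxOf v2 ≠ 0 := by
        intro h0
        apply G.ne_of_adj h2
        rw [← ha0, ← List.getElem_idxOf (List.idxOf_lt_length_iff.mpr hv2P)]
        simp [h0]
      have : P.idxOf v1 = P.idxOf v2 := by
        simp only at he
        omega
      exact (List.idxOf_inj hv1P).mp this
  have hcardTb : G.degree b ≤ Tb.card := by
    rw [← SimpleGraph.card_neighborFinset_eq_degree]
    apply Finset.card_le_card_of_injOn (fun v => P.idxOf v)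
    · intro v hv
      rw [Finset.mem_coe, SimpleGraph.mem_neighborFinset] at hv
      have hvP : v ∈ P := hnb_last v hv
      have hlt : P.idxOf v < m := List.idxOf_lt_length_iff.mpr hvP
      have hget : P[P.idxOf v]'hlt = v := List.getElem_idxOf hlt
      have h0 : P.idxOf v ≠ m - 1 := by
        intro h0
        apply G.ne_of_adj hv
        rw [← hbm, ← hget]
        simp [h0]
      simp only [hTb, Finset.mem_coe, Finset.mem_filter, Finset.mem_range]
      refine ⟨by omega, ?_⟩
      rw [List.getD_eq_getElem _ _ hlt, hget]
      exact hv
    · intro v1 h1 v2 h2 he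
      rw [Finset.mem_coe, SimpleGraph.mem_neighborFinset] at h1 h2
      exact (List.idxOf_inj (hnb_last v1 h1)).mp he
  -- pigeonhole: a common index
  have hSaTb : (Sa ∩ Tb).Nonempty := by
    rw [← Finset.card_pos]
    have hU : (Sa ∪ Tb).card ≤ m - 1 := by
      have : Sa ∪ Tb ⊆ Finset.range (m-1) := by
        apply Finset.union_subset <;> exact Finset.filter_subset _ _
      simpa using Finset.card_le_card this
    have := Finset.card_union_add_card_inter Sa Tb
    have hda := hdeg' a
    have hdb := hdeg' b
    omega
  obtain ⟨i, hi⟩ := hSaTb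
  rw [Finset.mem_inter, hSa, hTb, Finset.mem_filter, Finset.mem_filter, Finset.mem_range] at hi
  obtain ⟨⟨him, hiS⟩, -, hiT⟩ := hi
  have hi1m : i + 1 < m := by omega
  rw [List.getD_eq_getElem _ _ hi1m] at hiS
  rw [List.getD_eq_getElem _ _ (by omega : i < m)] at hiT
  -- the cycle list
  set A := P.take (i+1) with hA
  set D := P.drop (i+1) with hD
  have hAne : A ≠ [] := by
    rw [hA, ← List.length_pos_iff]
    simp only [List.length_take]
    omega
  have hDne : D ≠ [] := by
    rw [hD, ← List.length_pos_iff]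
    simp only [List.length_drop]
    omega
  set C := A ++ D.reverse with hC
  have hCperm : C.Perm P := by
    calc C = A ++ D.reverse := hC
    _ ~ A ++ D := (D.reverse_perm).append_left A
    _ = P := List.take_append_drop _ _
  have hCne : C ≠ [] := by
    intro h
    rw [h] at hCperm
    exact hPne hCperm.symm.eq_nil
  have hClen : C.length = m := by rw [hCperm.length_eq]
  have hCnd : C.Nodup := hCperm.nodup_iff.mpr hPnd
  -- key list facts
  have hAlast : A.getLast hAne = P[i]'(by omega) := by
    rw [List.getLast_eq_getElem]
    have : A.length - 1 = i := by simp [hA]; omega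
    simp only [this, hA]
    rw [List.getElem_take]; simp only [List.length_take]; congr 1; omega
  have hDhead : D.head hDne = P[i+1]'hi1m := by
    rw [← List.getElem_zero (List.length_pos_iff.mpr hDne)]
    simp only [hD]
    rw [List.getElem_drop]
  have hDlast : D.getLast hDne = b := by
    rw [← hbm, List.getLast_eq_getElem]
    have h1 : D.length - 1 < D.length := by
      have := List.length_pos_iff.mpr hDne
      omega
    have h2 : D[D.length - 1]'h1 = P[(i+1) + (D.length - 1)]'(by
        have := List.length_pos_iff.mpr hDne
        simp only [hD, List.length_drop] at this ⊢
        omega) := by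
      simp only [hD]
      exact List.getElem_drop ..
    rw [h2]
    congr 1
    have := List.length_pos_iff.mpr hDne
    simp only [hD, List.length_drop] at this ⊢
    omega
  have hDrevne : D.reverse ≠ [] := by simpa using hDne
  have hChead : C.head hCne = a := by
    have h1 : C.head hCne = A.head hAne := by
      simp only [hC]
      exact List.head_append_of_ne_nil ..
    rw [h1, ← ha0, ← List.getElem_zero (List.length_pos_iff.mpr hAne)]
    simp only [hA]
    exact List.getElem_take ..
  have hClast : C.getLast hCne = P[i+1]'hi1m := by
    have h1 : C.getLast hCne = D.reverse.getLast hDrevne := by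
      simp only [hC]
      exact List.getLast_append_of_ne_nil ..
    rw [h1, List.getLast_reverse, hDhead]
  have hCchain : C.Chain' G.Adj := by
    rw [hC]
    apply List.isChain_append.mpr
    refine ⟨hPchain.take _, ?_, ?_⟩
    · rw [List.isChain_reverse]
      exact (hPchain.drop _).imp (fun _ _ h => h.symm)
    · intro x hx y hy
      rw [List.getLast?_eq_getLast hAne] at hx
      obtain rfl := Option.some_injective _ hx
      rw [List.head?_eq_head hDrevne] at hy
      obtain rfl := Option.some_injective _ hy
      rw [List.head_reverse, hAlast, hDlast]
      exact hiT.symm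
  have hCcyc : G.Adj (C.getLast hCne) (C.head hCne) := by
    rw [hChead, hClast]
    exact hiS.symm
  -- `P` covers all vertices
  have hPuniv : P.toFinset = Finset.univ := by
    by_contra hPu
    -- there is a vertex outside `P` adjacent to a vertex of `P`
    have hmcard : P.toFinset.card = m := List.toFinset_card_of_nodup hPnd
    obtain ⟨w, hwP, c, hcP, hwc⟩ :
        ∃ w, w ∉ P.toFinset ∧ ∃ c ∈ P.toFinset, G.Adj w c := by
      by_contra hno
      push_neg at hno
      obtain ⟨w, hw⟩ : ∃ w, w ∉ P.toFinset := by
        by_contra hall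
        push_neg at hall
        exact hPu (Finset.eq_univ_iff_forall.mpr hall)
      have hsub1 : G.neighborFinset a ∪ {a} ⊆ P.toFinset := by
        intro x hx
        rw [Finset.mem_union, SimpleGraph.mem_neighborFinset, Finset.mem_singleton] at hx
        rcases hx with hx | rfl
        · exact List.mem_toFinset.mpr (hnb_head x hx)
        · exact List.mem_toFinset.mpr haP
      have hc1 : G.degree a + 1 ≤ m := by
        have := Finset.card_le_card hsub1
        rwa [Finset.card_union_of_disjoint (by simp), SimpleGraph.card_neighborFinset_eq_degree,
          Finset.card_singleton, hmcard] at this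
      have hsub2 : G.neighborFinset w ∪ {w} ⊆ P.toFinsetᶜ := by
        intro x hx
        rw [Finset.mem_union, SimpleGraph.mem_neighborFinset, Finset.mem_singleton] at hx
        rw [Finset.mem_compl]
        rcases hx with hx | rfl
        · intro hxP
          exact hno w hw x hxP hx
        · exact hw
      have hc2 : G.degree w + 1 ≤ n - m := by
        have := Finset.card_le_card hsub2
        rwa [Finset.card_union_of_disjoint (by simp), SimpleGraph.card_neighborFinset_eq_degree,
          Finset.card_singleton, Finset.card_compl, hmcard] at this
      have hda := hdeg' a
      have hdw := hdeg' w
      omega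
    -- rotate the cycle `C` and extend by `w`
    have hcC : c ∈ C := hCperm.mem_iff.mpr (List.mem_toFinset.mp hcP)
    obtain ⟨A', B', hC'⟩ := List.append_of_mem hcC
    have hrot : List.Chain' G.Adj ((c :: B') ++ A') := by
      apply DiracAux.chain'_rotate (hC' ▸ hCchain)
      intro x hx y hy
      rw [← hC', List.getLast?_eq_getLast hCne] at hx
      obtain rfl := Option.some_injective _ hx
      rw [← hC', List.head?_eq_head hCne] at hy
      obtain rfl := Option.some_injective _ hy
      exact hCcyc
    have hgood : Good (w :: (c :: B' ++ A')) := by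
      refine ⟨by simp, List.isChain_cons.mpr ⟨?_, hrot⟩, ?_⟩
      · intro y hy
        simp only [List.cons_append, List.head?_cons, Option.mem_some_iff] at hy
        subst hy
        exact hwc
      · rw [List.nodup_cons]
        constructor
        · intro hwmem
          apply hwP
          rw [List.mem_toFinset]
          apply hCperm.mem_iff.mp
          rw [hC']
          have : (c :: B' ++ A').Perm (A' ++ c :: B') := List.perm_append_comm
          exact this.mem_iff.mp hwmem
        · have : (c :: B' ++ A').Perm C := by
            rw [hC']
            exact List.perm_append_comm
          exact this.nodup_iff.mpr hCnd
    have := hmax _ hgood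
    have hlen : (w :: (c :: B' ++ A')).length = m + 1 := by
      have : (c :: B' ++ A').length = C.length := by
        rw [hC']
        simp only [List.length_append, List.length_cons]
        omega
      simp only [List.length_cons, this, hClen]
    omega
  have hmn' : m = n := by
    have h1 : P.toFinset.card = m := List.toFinset_card_of_nodup hPnd
    rw [hPuniv, Finset.card_univ] at h1
    omega
  -- now build the Hamiltonian cycle from `C`
  have hCuniv : ∀ v : V, v ∈ C := by
    intro v
    apply hCperm.mem_iff.mpr
    rw [← List.mem_toFinset, hPuniv]
    exact Finset.mem_univ v
  clear hCperm hC hChead hClast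
  clear hAlast
  clear_value C
  intro _
  rcases C with - | ⟨a', L⟩
  · exact absurd rfl hCne
  have hLne : L ≠ [] := by
    intro h
    rw [h] at hClen
    simp only [List.length_cons, List.length_nil] at hClen
    omega
  set b' := L.getLast hLne with hb'
  have hchainL : List.Chain G.Adj a' (L.dropLast ++ [b']) := by
    rw [hb', List.dropLast_append_getLast hLne]
    exact hCchain
  set q := DiracAux.buildWalk G a' b' L.dropLast hchainL with hq
  have hqsupp : q.support = a' :: L := by
    rw [hq, DiracAux.buildWalk_support]
    rw [hb', List.dropLast_append_getLast hLne]
  have hqpath : q.IsPath := by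
    rw [SimpleGraph.Walk.isPath_def, hqsupp]
    exact hCnd
  have hqlen : 2 ≤ q.length := by
    have h1 := SimpleGraph.Walk.length_support q
    rw [hqsupp] at h1
    simp only [List.length_cons] at h1 hClen
    omega
  have hb'a' : G.Adj b' a' := by
    have h1 : (a' :: L).getLast hCne = b' := by
      rw [List.getLast_cons hLne, hb']
    have h2 : (a' :: L).head hCne = a' := rfl
    rw [h1, h2] at hCcyc
    exact hCcyc
  refine ⟨a', SimpleGraph.Walk.cons hb'a'.symm q.reverse, ?_⟩
  rw [SimpleGraph.Walk.isHamiltonianCycle_iff_isCycle_and_support_count_tail_eq_one]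
  constructor
  · rw [SimpleGraph.Walk.cons_isCycle_iff]
    refine ⟨hqpath.reverse, ?_⟩
    rw [SimpleGraph.Walk.edges_reverse, List.mem_reverse, Sym2.eq_swap]
    exact DiracAux.not_mem_edges q hqpath hqlen
  · intro x
    have hsupp : (SimpleGraph.Walk.cons hb'a'.symm q.reverse).support
        = a' :: (a' :: L).reverse := by
      rw [SimpleGraph.Walk.support_cons, SimpleGraph.Walk.support_reverse, hqsupp]
    rw [hsupp]
    simp only [List.tail_cons]
    rw [List.count_reverse]
    exact List.count_eq_one_of_mem hCnd (hCuniv x)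
end
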